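/- (Lemma 2.5) Let n ≥ 2, let X_1, ..., X_n be i.i.d. random variables taking values in [0,1], let c > 0 with E(X_1) > c, let Y_i = X_i - i·c, and set v_i = V(Y_1,...,Y_i) for i = 1,...,n-1. Assume that P(X_1 ∈ {1, v_{n-1}, ..., v_1, 0}) = 1, P(X_1 = 1) > 0 and P(X_1 = 0) > 0. Then c - P(X_1 = 1) < 0, i.e. P(X_1 = 1) > c. -/

import Mathlib

open MeasureTheory ProbabilityTheory

/-- The σ-algebra generated by `Y 1, ..., Y i`. -/
def priorSigma {Ω : Type*} (Y : ℕ → Ω → ℝ) (i : ℕ) : MeasurableSpace Ω :=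
  ⨆ j ∈ Finset.Icc 1 i, MeasurableSpace.comap (Y j) Real.measurableSpace

/-- `τ` is a stopping rule for `Y 1, ..., Y n`: it takes values in `{1, ..., n}` and
each event `{τ = i}` depends only on `Y 1, ..., Y i`. -/
def IsStopRule {Ω : Type*} (Y : ℕ → Ω → ℝ) (n : ℕ) (τ : Ω → ℕ) : Prop :=
  (∀ ω, τ ω ∈ Finset.Icc 1 n) ∧
  ∀ i ∈ Finset.Icc 1 n, MeasurableSet[priorSigma Y i] {ω | τ ω = i}

/-- `V(Y_1,...,Y_n) = sup_τ E(Y_τ)`: the optimal expected return of the statistician. -/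
noncomputable def Vn {Ω : Type*} [MeasurableSpace Ω] (μ : Measure Ω)
    (Y : ℕ → Ω → ℝ) (n : ℕ) : ℝ :=
  sSup {r | ∃ τ, IsStopRule Y n τ ∧ r = ∫ ω, Y (τ ω) ω ∂μ}

/-- `M(Y_1,...,Y_n) = E(max_{1 ≤ i ≤ n} Y_i)`: the expected return of the prophet. -/
noncomputable def Mn {Ω : Type*} [MeasurableSpace Ω] (μ : Measure Ω)
    (Y : ℕ → Ω → ℝ) (n : ℕ) : ℝ :=
  ∫ ω, sSup ((fun i => Y i ω) '' Set.Icc 1 n) ∂μ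

set_option linter.unusedVariables false
set_option maxHeartbeats 1000000

theorem stmt12
    {Ω : Type*} [MeasurableSpace Ω] (μ : Measure Ω) [IsProbabilityMeasure μ]
    (n : ℕ) (X : ℕ → Ω → ℝ)
    (hmeas : ∀ i, Measurable (X i))
    (hindep : iIndepFun (fun i : Fin n => X (i.1 + 1)) μ)
    (hident : ∀ i ∈ Set.Icc 1 n, IdentDistrib (X i) (X 1) μ μ)
    (hval : ∀ i ∈ Set.Icc 1 n, ∀ ω, X i ω ∈ Set.Icc (0:ℝ) 1)
    (c : ℝ) (Y : ℕ → Ω → ℝ) (hY : ∀ i ω, Y i ω = X i ω - i * c)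
    (hn : 2 ≤ n) (hc : 0 < c) (hEX : c < ∫ ω, X 1 ω ∂μ)
    (hsupp : μ {ω | X 1 ω ∈ insert (1:ℝ) (insert 0 ((fun i => Vn μ Y i) '' Set.Icc 1 (n-1)))} = 1)
    (h1 : 0 < μ {ω | X 1 ω = 1}) (h0 : 0 < μ {ω | X 1 ω = 0}) :
    c < (μ {ω | X 1 ω = 1}).toReal := by
  classical
  set m := n - 1 with hmdef
  have hm1 : 1 ≤ m := by omega
  set p := (μ {ω | X 1 ω = 1}).toReal with hpdef
  set v := Vn μ Y m with hvdef
  -- basic facts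
  have hYeq : ∀ i, Y i = fun ω => X i ω - (i:ℝ) * c := fun i => funext (hY i)
  have hYmeas : ∀ i, Measurable (Y i) := by
    intro i; rw [hYeq]; exact (hmeas i).sub measurable_const
  have hcomap : ∀ j : ℕ, MeasurableSpace.comap (Y j) Real.measurableSpace
      = MeasurableSpace.comap (X j) Real.measurableSpace := by
    intro j
    rw [hYeq j]
    apply le_antisymm
    · have h1' : (fun ω => X j ω - (j:ℝ)*c) = (fun x : ℝ => x - (j:ℝ)*c) ∘ X j := rfl
      rw [h1', ← MeasurableSpace.comap_comp]
      exact MeasurableSpace.comap_mono (measurable_sub_const _).comap_le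
    · have h2 : X j = (fun x : ℝ => x + (j:ℝ)*c) ∘ (fun ω => X j ω - (j:ℝ)*c) := by
        funext ω; simp
      conv_lhs => rw [h2]
      rw [← MeasurableSpace.comap_comp]
      exact MeasurableSpace.comap_mono (measurable_add_const _).comap_le
  have hprior_le : ∀ i (s : Set Ω), MeasurableSet[priorSigma Y i] s → MeasurableSet s := by
    intro i s hs
    have h : priorSigma Y i ≤ _ := iSup₂_le fun j _ => (hYmeas j).comap_le
    exact h s hs
  have hprior_mono : ∀ i j : ℕ, i ≤ j → priorSigma Y i ≤ priorSigma Y j := by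
    intro i j hij
    unfold priorSigma
    refine iSup₂_le fun k hk => ?_
    have hk' := Finset.mem_Icc.mp hk
    exact le_iSup₂ (f := fun t (_ : t ∈ Finset.Icc 1 j) =>
      MeasurableSpace.comap (Y t) Real.measurableSpace) k
      (Finset.mem_Icc.mpr ⟨hk'.1, hk'.2.trans hij⟩)
  have hpriorX : ∀ i, priorSigma Y i
      = ⨆ j ∈ Finset.Icc 1 i, MeasurableSpace.comap (X j) Real.measurableSpace := by
    intro i; exact iSup_congr fun j => iSup_congr fun _ => hcomap j
  have hXint : ∀ i ∈ Set.Icc 1 n, Integrable (X i) μ := by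
    intro i hi
    refine (integrable_const (1:ℝ)).mono' (hmeas i).aestronglyMeasurable
      (Filter.Eventually.of_forall fun ω => ?_)
    have h := hval i hi ω
    rw [Real.norm_eq_abs, abs_le]
    exact ⟨by linarith [h.1], h.2⟩
  have hYint : ∀ i ∈ Set.Icc 1 n, Integrable (Y i) μ := by
    intro i hi; rw [hYeq]; exact (hXint i hi).sub (integrable_const _)
  -- stopping rule basics
  have hτmeas : ∀ τ, IsStopRule Y m τ → ∀ i, MeasurableSet {ω | τ ω = i} := by
    intro τ hτ i
    by_cases hi : i ∈ Finset.Icc 1 m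
    · exact hprior_le i _ (hτ.2 i hi)
    · have he : {ω | τ ω = i} = ∅ := by
        ext ω
        simp only [Set.mem_setOf_eq, Set.mem_empty_iff_false, iff_false]
        intro h; exact hi (h ▸ hτ.1 ω)
      rw [he]; exact MeasurableSet.empty
  have hfeq : ∀ τ, IsStopRule Y m τ → (fun ω => Y (τ ω) ω)
      = fun ω => ∑ i ∈ Finset.Icc 1 m, ({ω' | τ ω' = i}).indicator (Y i) ω := by
    intro τ hτ; funext ω
    rw [Finset.sum_eq_single (τ ω)]
    · have hωmem : ω ∈ {ω' | τ ω' = τ ω} := rfl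
      exact (Set.indicator_of_mem hωmem _).symm
    · intro b _ hb
      refine Set.indicator_of_notMem ?_ _
      intro h
      simp only [Set.mem_setOf_eq] at h
      exact hb (Eq.symm h)
    · intro h; exact absurd (hτ.1 ω) h
  have hfint : ∀ τ, IsStopRule Y m τ → Integrable (fun ω => Y (τ ω) ω) μ := by
    intro τ hτ
    rw [hfeq τ hτ]
    refine integrable_finset_sum _ fun i hi => ?_
    have hi' : i ∈ Set.Icc 1 n := by
      have := Finset.mem_Icc.mp hi; exact Set.mem_Icc.mpr ⟨this.1, by omega⟩
    exact (hYint i hi').indicator (hτmeas τ hτ i)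
  have hfint_eq : ∀ τ, IsStopRule Y m τ →
      ∫ ω, Y (τ ω) ω ∂μ = ∑ i ∈ Finset.Icc 1 m, ∫ ω in {ω' | τ ω' = i}, Y i ω ∂μ := by
    intro τ hτ
    rw [hfeq τ hτ, integral_finset_sum]
    · exact Finset.sum_congr rfl fun i hi => integral_indicator (hτmeas τ hτ i)
    · intro i hi
      have hi' : i ∈ Set.Icc 1 n := by
        have := Finset.mem_Icc.mp hi; exact Set.mem_Icc.mpr ⟨this.1, by omega⟩
      exact (hYint i hi').indicator (hτmeas τ hτ i)
  -- Vn facts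
  have hSdef : v = sSup {r | ∃ τ, IsStopRule Y m τ ∧ r = ∫ ω, Y (τ ω) ω ∂μ} := rfl
  have hτ0 : ∀ k, 1 ≤ k → IsStopRule Y k (fun _ => 1) := by
    intro k hk
    constructor
    · intro ω; exact Finset.mem_Icc.mpr ⟨le_refl 1, hk⟩
    · intro i hi
      by_cases h : i = 1
      · subst h
        have he : {ω : Ω | (fun _ => 1) ω = 1} = Set.univ := by
          ext ω; simp
        rw [he]; exact @MeasurableSet.univ Ω (priorSigma Y 1)
      · have he : {ω : Ω | (fun _ => 1) ω = i} = ∅ := by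
          ext ω; simp only [Set.mem_setOf_eq, Set.mem_empty_iff_false, iff_false]
          intro hh; exact h hh.symm
        rw [he]; exact @MeasurableSet.empty Ω (priorSigma Y i)
  have hext : ∀ j τ, j ≤ m → IsStopRule Y j τ → IsStopRule Y m τ := by
    intro j τ hjm hτ
    constructor
    · intro ω
      have := Finset.mem_Icc.mp (hτ.1 ω)
      exact Finset.mem_Icc.mpr ⟨this.1, this.2.trans hjm⟩
    · intro i hi
      by_cases h : i ≤ j
      · exact hτ.2 i (Finset.mem_Icc.mpr ⟨(Finset.mem_Icc.mp hi).1, h⟩)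
      · have he : {ω | τ ω = i} = ∅ := by
          ext ω; simp only [Set.mem_setOf_eq, Set.mem_empty_iff_false, iff_false]
          intro heq
          have := Finset.mem_Icc.mp (hτ.1 ω)
          omega
        rw [he]; exact @MeasurableSet.empty Ω (priorSigma Y i)
  have hYτle : ∀ τ, IsStopRule Y m τ → ∀ ω, Y (τ ω) ω ≤ 1 - c := by
    intro τ hτ ω
    have h1' := Finset.mem_Icc.mp (hτ.1 ω)
    rw [hY]
    have hX := (hval (τ ω) (Set.mem_Icc.mpr ⟨h1'.1, by omega⟩) ω).2
    have hcast : (1:ℝ) ≤ (τ ω : ℝ) := by exact_mod_cast h1'.1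
    nlinarith
  have hub : ∀ r ∈ {r | ∃ τ, IsStopRule Y m τ ∧ r = ∫ ω, Y (τ ω) ω ∂μ}, r ≤ 1 - c := by
    rintro r ⟨τ, hτ, rfl⟩
    calc ∫ ω, Y (τ ω) ω ∂μ ≤ ∫ _ω, (1 - c) ∂μ :=
          integral_mono (hfint τ hτ) (integrable_const _) (fun ω => hYτle τ hτ ω)
      _ = 1 - c := by simp
  have hmem1 : (∫ ω, Y 1 ω ∂μ) ∈ {r | ∃ τ, IsStopRule Y m τ ∧ r = ∫ ω, Y (τ ω) ω ∂μ} :=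
    ⟨fun _ => 1, hτ0 m hm1, rfl⟩
  have hbdd : BddAbove {r | ∃ τ, IsStopRule Y m τ ∧ r = ∫ ω, Y (τ ω) ω ∂μ} := ⟨1 - c, hub⟩
  have hvle : v ≤ 1 - c := by rw [hSdef]; exact csSup_le ⟨_, hmem1⟩ hub
  have hEY1 : ∫ ω, Y 1 ω ∂μ = (∫ ω, X 1 ω ∂μ) - c := by
    rw [hYeq 1, integral_sub (hXint 1 (Set.mem_Icc.mpr ⟨le_refl 1, by omega⟩)) (integrable_const _)]
    simp
  have hvge : (∫ ω, X 1 ω ∂μ) - c ≤ v := by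
    rw [hSdef]; exact hEY1 ▸ le_csSup hbdd hmem1
  have hv0 : 0 < v := lt_of_lt_of_le (by linarith) hvge
  have hp0 : 0 < p := ENNReal.toReal_pos h1.ne' (measure_ne_top μ _)
  have h1v : 0 < 1 - v := by linarith
  have hVnle : ∀ j ∈ Set.Icc 1 m, Vn μ Y j ≤ v := by
    intro j hj
    rw [hSdef]
    apply csSup_le_csSup hbdd
    · exact ⟨∫ ω, Y 1 ω ∂μ, fun _ => 1, hτ0 j hj.1, rfl⟩
    · rintro r ⟨τ, hτ, rfl⟩
      exact ⟨τ, hext j τ hj.2 hτ, rfl⟩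
  -- support facts
  set SS : Set ℝ := insert (1:ℝ) (insert 0 ((fun i => Vn μ Y i) '' Set.Icc 1 m)) with hSS
  have hSSm : MeasurableSet SS :=
    ((((Set.finite_Icc 1 m).image _).insert 0).insert 1).measurableSet
  have hae : ∀ i ∈ Set.Icc 1 n, ∀ᵐ ω ∂μ, X i ω ∈ SS := by
    intro i hi
    have h := (hident i hi).measure_mem_eq hSSm
    have h2 : μ (X i ⁻¹' SS) = 1 := by rw [h]; exact hsupp
    rw [ae_iff]
    have he : {ω | ¬ X i ω ∈ SS} = (X i ⁻¹' SS)ᶜ := rfl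
    rw [he, prob_compl_eq_zero_iff ((hmeas i) hSSm)]
    exact h2
  have hptwise : ∀ i ∈ Set.Icc 1 n, ∀ᵐ ω ∂μ,
      X i ω ≤ (1-v) * ({ω' | X i ω' = 1}).indicator (fun _ => (1:ℝ)) ω + v := by
    intro i hi
    filter_upwards [hae i hi] with ω hω
    by_cases h1' : X i ω = 1
    · have hmem : ω ∈ {ω' | X i ω' = 1} := h1'
      rw [Set.indicator_of_mem hmem, h1']
      simp only [mul_one]
      linarith
    · have hnmem : ω ∉ {ω' | X i ω' = 1} := h1'
      rw [Set.indicator_of_notMem hnmem, mul_zero, zero_add]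
      rcases Set.mem_insert_iff.mp hω with h | hω'
      · exact absurd h h1'
      rcases Set.mem_insert_iff.mp hω' with h | hω''
      · rw [h]; exact hv0.le
      obtain ⟨j, hj, hje⟩ := hω''
      rw [← hje]
      exact hVnle j hj
  -- key estimate
  have key : (1-v)*p ≤ c → ∀ r ∈ {r | ∃ τ, IsStopRule Y m τ ∧ r = ∫ ω, Y (τ ω) ω ∂μ},
      r ≤ v + ((1-v)*p - c) := by
    intro hcase r hr
    obtain ⟨τ, hτ, rfl⟩ := hr
    set A : ℕ → Set Ω := fun i => {ω' | τ ω' = i} with hA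
    set B : ℕ → Set Ω := fun i => {ω' | X i ω' = 1} with hB
    set G : ℕ → Set Ω := fun i => {ω' | i ≤ τ ω'} with hG
    have hAmeas : ∀ i, MeasurableSet (A i) := hτmeas τ hτ
    have hBmeas : ∀ i, MeasurableSet (B i) := fun i => (hmeas i) (measurableSet_singleton 1)
    have hdisj : ∀ s : Finset ℕ, (↑s : Set ℕ).PairwiseDisjoint A := by
      intro s a _ b _ hab
      refine Set.disjoint_left.mpr ?_
      intro ω hωa hωb
      simp only [hA, Set.mem_setOf_eq] at hωa hωb
      exact hab (hωa ▸ hωb)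
    have hGeq : ∀ i, G i = ⋃ j ∈ Finset.Icc i m, A j := by
      intro i; ext ω
      simp only [hG, hA, Set.mem_setOf_eq, Set.mem_iUnion, Finset.mem_Icc, exists_prop]
      constructor
      · intro h
        have := Finset.mem_Icc.mp (hτ.1 ω)
        exact ⟨τ ω, ⟨h, this.2⟩, rfl⟩
      · rintro ⟨j, ⟨hij, hjm⟩, hj⟩
        omega
    have hGmeas : ∀ i, MeasurableSet (G i) := by
      intro i; rw [hGeq]; exact Finset.measurableSet_biUnion _ fun j _ => hAmeas j
    have hq1 : ∑ i ∈ Finset.Icc 1 m, (μ (A i)).toReal = 1 := by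
      rw [← ENNReal.toReal_sum (fun a _ => measure_ne_top μ _)]
      rw [← measure_biUnion_finset (hdisj _) (fun b _ => hAmeas b)]
      have hu : ⋃ j ∈ Finset.Icc 1 m, A j = Set.univ := by
        ext ω
        simp only [Set.mem_iUnion, Set.mem_univ, iff_true, exists_prop]
        exact ⟨τ ω, hτ.1 ω, rfl⟩
      rw [hu, measure_univ, ENNReal.toReal_one]
    have ht_eq : ∀ i, (μ (G i)).toReal = ∑ j ∈ Finset.Icc i m, (μ (A j)).toReal := by
      intro i
      rw [hGeq, measure_biUnion_finset (hdisj _) (fun b _ => hAmeas b),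
        ENNReal.toReal_sum (fun a _ => measure_ne_top μ _)]
    have hGB : ∀ i ∈ Finset.Icc 1 m, μ (G i ∩ B i) = μ (G i) * μ {ω | X 1 ω = 1} := by
      intro i hi
      obtain ⟨hi1, him⟩ := Finset.mem_Icc.mp hi
      have hBid : μ (B i) = μ {ω | X 1 ω = 1} :=
        (hident i (Set.mem_Icc.mpr ⟨hi1, by omega⟩)).measure_mem_eq (measurableSet_singleton (1:ℝ))
      rcases eq_or_lt_of_le hi1 with h1e | h2i
      · have hGu : G i = Set.univ := by
          ext ω; simp only [hG, Set.mem_setOf_eq, Set.mem_univ, iff_true]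
          have := Finset.mem_Icc.mp (hτ.1 ω); omega
        rw [hGu, Set.univ_inter, measure_univ, one_mul, hBid]
      · have hGprior : MeasurableSet[priorSigma Y (i-1)] (G i) := by
          have hGeq2 : G i = ⋂ j ∈ Finset.Icc 1 (i-1), (A j)ᶜ := by
            ext ω
            simp only [hG, hA, Set.mem_setOf_eq, Set.mem_iInter, Set.mem_compl_iff,
              Finset.mem_Icc]
            have hmem := Finset.mem_Icc.mp (hτ.1 ω)
            constructor
            · intro h j hj heq; omega
            · intro h
              by_contra hcon
              push_neg at hcon
              exact h (τ ω) ⟨hmem.1, by omega⟩ rfl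
          rw [hGeq2]
          refine Finset.measurableSet_biInter _ fun j hj => ?_
          have hj' := Finset.mem_Icc.mp hj
          exact (hprior_mono j (i-1) hj'.2 _ (hτ.2 j (Finset.mem_Icc.mpr ⟨hj'.1, by omega⟩))).compl
        have hiI : iIndep (fun k : Fin n =>
            MeasurableSpace.comap (fun ω => X (k.1+1) ω) Real.measurableSpace) μ := hindep.iIndep
        have hIndep := indep_biSup_compl (fun k => (hmeas _).comap_le) hiI {k : Fin n | k.1 + 1 < i}
        have hL : priorSigma Y (i-1) ≤ ⨆ k ∈ {k : Fin n | k.1 + 1 < i},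
            MeasurableSpace.comap (fun ω => X (k.1+1) ω) Real.measurableSpace := by
          rw [hpriorX]
          refine iSup₂_le fun j hj => ?_
          obtain ⟨hj1, hj2⟩ := Finset.mem_Icc.mp hj
          have hjn : j - 1 < n := by omega
          have hXe : X j = fun ω => X ((⟨j-1, hjn⟩ : Fin n).1 + 1) ω := by
            have he : j - 1 + 1 = j := by omega
            show X j = fun ω => X (j - 1 + 1) ω
            rw [he]
          rw [hXe]
          exact le_iSup₂ (f := fun k (_ : k ∈ {k : Fin n | k.1 + 1 < i}) =>
            MeasurableSpace.comap (fun ω => X (k.1+1) ω) Real.measurableSpace)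
            (⟨j-1, hjn⟩ : Fin n) (by simp only [Set.mem_setOf_eq]; omega)
        have hR : MeasurableSpace.comap (X i) Real.measurableSpace ≤
            ⨆ k ∈ {k : Fin n | k.1 + 1 < i}ᶜ,
            MeasurableSpace.comap (fun ω => X (k.1+1) ω) Real.measurableSpace := by
          have hin : i - 1 < n := by omega
          have hXe : X i = fun ω => X ((⟨i-1, hin⟩ : Fin n).1 + 1) ω := by
            have he : i - 1 + 1 = i := by omega
            show X i = fun ω => X (i - 1 + 1) ω
            rw [he]
          rw [hXe]
          exact le_iSup₂ (f := fun k (_ : k ∈ {k : Fin n | k.1 + 1 < i}ᶜ) =>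
            MeasurableSpace.comap (fun ω => X (k.1+1) ω) Real.measurableSpace)
            (⟨i-1, hin⟩ : Fin n) (by simp only [Set.mem_compl_iff, Set.mem_setOf_eq]; omega)
        have hfin := indep_of_indep_of_le_right (indep_of_indep_of_le_left hIndep hL) hR
        rw [← hBid]
        exact (Indep_iff _ _ _).mp hfin _ _ hGprior ⟨{1}, measurableSet_singleton 1, rfl⟩
    have hper : ∀ i ∈ Finset.Icc 1 m, ∫ ω in A i, Y i ω ∂μ ≤
        (1-v) * (p * (μ (G i)).toReal) + v * (μ (A i)).toReal - (i:ℝ) * c * (μ (A i)).toReal := by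
      intro i hi
      obtain ⟨hi1, him⟩ := Finset.mem_Icc.mp hi
      have hin : i ∈ Set.Icc 1 n := Set.mem_Icc.mpr ⟨hi1, by omega⟩
      have hYsplit : ∫ ω in A i, Y i ω ∂μ
          = (∫ ω in A i, X i ω ∂μ) - (i:ℝ) * c * (μ (A i)).toReal := by
        rw [hYeq i, integral_sub ((hXint i hin).integrableOn) (integrable_const _)]
        rw [setIntegral_const, smul_eq_mul, measureReal_def]
        ring
      have hXbound : ∫ ω in A i, X i ω ∂μ
          ≤ (1-v) * (μ (A i ∩ B i)).toReal + v * (μ (A i)).toReal := by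
        have hgint : Integrable (fun ω => (1-v) * (B i).indicator (fun _ => (1:ℝ)) ω + v) μ :=
          (((integrable_const (1:ℝ)).indicator (hBmeas i)).const_mul _).add (integrable_const v)
        calc ∫ ω in A i, X i ω ∂μ
            ≤ ∫ ω in A i, ((1-v) * (B i).indicator (fun _ => (1:ℝ)) ω + v) ∂μ :=
              setIntegral_mono_ae (hXint i hin).integrableOn hgint.integrableOn (hptwise i hin)
          _ = (1-v) * (μ (A i ∩ B i)).toReal + v * (μ (A i)).toReal := by
              rw [integral_add
                ((((integrable_const (1:ℝ)).indicator (hBmeas i)).const_mul _).integrableOn)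
                ((integrable_const v).integrableOn)]
              rw [integral_const_mul, setIntegral_indicator (hBmeas i), setIntegral_const,
                setIntegral_const]
              simp only [smul_eq_mul, mul_one, measureReal_def]
              ring
      have hrC : (μ (A i ∩ B i)).toReal ≤ p * (μ (G i)).toReal := by
        have hsub : A i ∩ B i ⊆ G i ∩ B i := by
          intro ω hω
          refine ⟨?_, hω.2⟩
          have hτω : τ ω = i := hω.1
          simp only [hG, Set.mem_setOf_eq]
          omega
        have hle1 : μ (A i ∩ B i) ≤ μ (G i ∩ B i) := measure_mono hsub
        calc (μ (A i ∩ B i)).toReal ≤ (μ (G i ∩ B i)).toReal :=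
              ENNReal.toReal_mono (measure_ne_top μ _) hle1
          _ = (μ (G i)).toReal * p := by rw [hGB i hi, ENNReal.toReal_mul]
          _ = p * (μ (G i)).toReal := mul_comm _ _
      have hmul := mul_le_mul_of_nonneg_left hrC (le_of_lt h1v)
      calc ∫ ω in A i, Y i ω ∂μ
          = (∫ ω in A i, X i ω ∂μ) - (i:ℝ) * c * (μ (A i)).toReal := hYsplit
        _ ≤ (1-v) * (μ (A i ∩ B i)).toReal + v * (μ (A i)).toReal
            - (i:ℝ) * c * (μ (A i)).toReal := by linarith
        _ ≤ (1-v) * (p * (μ (G i)).toReal) + v * (μ (A i)).toReal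
            - (i:ℝ) * c * (μ (A i)).toReal := by linarith
    have hsum_t : ∑ i ∈ Finset.Icc 1 m, (μ (G i)).toReal
        = ∑ j ∈ Finset.Icc 1 m, (j:ℝ) * (μ (A j)).toReal := by
      have hstep : ∀ i ∈ Finset.Icc 1 m, (μ (G i)).toReal
          = ∑ j ∈ Finset.Icc 1 m, (if i ≤ j then (μ (A j)).toReal else 0) := by
        intro i hi
        rw [ht_eq i, ← Finset.sum_filter]
        apply Finset.sum_congr _ (fun _ _ => rfl)
        ext j
        simp only [Finset.mem_Icc, Finset.mem_filter]
        have := (Finset.mem_Icc.mp hi).1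
        omega
      rw [Finset.sum_congr rfl hstep, Finset.sum_comm]
      refine Finset.sum_congr rfl fun j hj => ?_
      rw [← Finset.sum_filter, Finset.sum_const]
      have hfil : (Finset.Icc 1 m).filter (fun i => i ≤ j) = Finset.Icc 1 j := by
        ext i
        simp only [Finset.mem_Icc, Finset.mem_filter]
        have := (Finset.mem_Icc.mp hj).2
        omega
      rw [hfil, Nat.card_Icc, Nat.add_sub_cancel, nsmul_eq_mul]
    have hT1 : (1:ℝ) ≤ ∑ j ∈ Finset.Icc 1 m, (j:ℝ) * (μ (A j)).toReal := by
      calc (1:ℝ) = ∑ i ∈ Finset.Icc 1 m, (μ (A i)).toReal := hq1.symm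
        _ ≤ ∑ j ∈ Finset.Icc 1 m, (j:ℝ) * (μ (A j)).toReal := by
            refine Finset.sum_le_sum fun i hi => ?_
            have hi1 := (Finset.mem_Icc.mp hi).1
            have hcast : (1:ℝ) ≤ (i:ℝ) := by exact_mod_cast hi1
            nlinarith [ENNReal.toReal_nonneg (a := μ (A i))]
    have hfac : (1-v)*p - c ≤ 0 := by linarith
    calc ∫ ω, Y (τ ω) ω ∂μ
        = ∑ i ∈ Finset.Icc 1 m, ∫ ω in A i, Y i ω ∂μ := hfint_eq τ hτ
      _ ≤ ∑ i ∈ Finset.Icc 1 m, ((1-v) * (p * (μ (G i)).toReal) + v * (μ (A i)).toReal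
            - (i:ℝ) * c * (μ (A i)).toReal) := Finset.sum_le_sum hper
      _ = ((1-v)*p) * (∑ i ∈ Finset.Icc 1 m, (μ (G i)).toReal)
            + v * (∑ i ∈ Finset.Icc 1 m, (μ (A i)).toReal)
            - c * (∑ i ∈ Finset.Icc 1 m, (i:ℝ) * (μ (A i)).toReal) := by
          rw [Finset.mul_sum, Finset.mul_sum, Finset.mul_sum, ← Finset.sum_add_distrib,
            ← Finset.sum_sub_distrib]
          exact Finset.sum_congr rfl fun i _ => by ring
      _ = v + ((1-v)*p - c) * (∑ j ∈ Finset.Icc 1 m, (j:ℝ) * (μ (A j)).toReal) := by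
          rw [hsum_t, hq1]; ring
      _ ≤ v + ((1-v)*p - c) * 1 := by nlinarith [hT1, hfac]
      _ = v + ((1-v)*p - c) := by ring
  have hfinal : c ≤ (1-v)*p := by
    by_contra hlt
    push_neg at hlt
    have h2 : v ≤ v + ((1-v)*p - c) := by
      rw [hSdef]
      exact csSup_le ⟨_, hmem1⟩ (key hlt.le)
    linarith
  nlinarith [hfinal, mul_pos hv0 hp0]
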